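/- Key fact for GAMW: given a delegation graph H_d, let g_max be a guru with the maximum accumulated weight α_d(g_max). For any losing coalition C ⊆ V\T_d(g_max) in the induced delegative simple game: if C ∪ T_d(g_max) is still a losing coalition, then for every guru g, C ∪ T_d(g) is also a losing coalition. -/
import Mathlib


open Finset
open scoped Classical

/-- Total weight of voters in `C` whose entire delegation chain (the iterates of `d`)
stays inside `C` (the "active" voters). -/
noncomputable def gamma {V : Type*} [Fintype V] (w : V → ℕ) (d : V → V) (C : Finset V) : ℕ :=
  ∑ i ∈ C, if ∀ k : ℕ, d^[k] i ∈ C then w i else 0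

/-- A coalition wins iff its active weight meets the quota. -/
def wins {V : Type*} [Fintype V] (w : V → ℕ) (d : V → V) (q : ℕ) (C : Finset V) : Prop :=
  q ≤ gamma w d C

/-- Voter `i` is a swing agent for coalition `C`. -/
noncomputable def swing {V : Type*} [Fintype V] (w : V → ℕ) (d : V → V) (q : ℕ)
    (i : V) (C : Finset V) : Prop :=
  ¬ wins w d q C ∧ wins w d q (insert i C)

/-- Number of coalitions `C ⊆ V \ {i}` for which `i` is a swing agent. -/
noncomputable def swingCount {V : Type*} [Fintype V] (w : V → ℕ) (d : V → V) (q : ℕ)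
    (i : V) : ℕ :=
  (((univ : Finset V).erase i).powerset.filter (fun C => swing w d q i C)).card

/-- Delegative Banzhaf measure. -/
noncomputable def DB {V : Type*} [Fintype V] (w : V → ℕ) (d : V → V) (q : ℕ) (i : V) : ℚ :=
  (swingCount w d q i : ℚ) / 2 ^ (Fintype.card V - 1)

/-- Delegative Shapley-Shubik index. -/
noncomputable def DS {V : Type*} [Fintype V] (w : V → ℕ) (d : V → V) (q : ℕ) (i : V) : ℚ :=
  ∑ C ∈ ((univ : Finset V).erase i).powerset,
    if swing w d q i C then
      (Nat.factorial C.card * Nat.factorial (Fintype.card V - C.card - 1) : ℚ) /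
        Nat.factorial (Fintype.card V)
    else 0

/-- The set of voters in the delegation tree rooted at `g` (those whose
delegation chain reaches `g`). -/
noncomputable def treeOf {V : Type*} [Fintype V] (d : V → V) (g : V) : Finset V :=
  (univ : Finset V).filter (fun l => ∃ k, d^[k] l = g)

lemma mem_treeOf {V : Type*} [Fintype V] {d : V → V} {g i : V} :
    i ∈ treeOf d g ↔ ∃ k, d^[k] i = g := by simp [treeOf]

lemma treeOf_closed {V : Type*} [Fintype V] {d : V → V} {g : V} (hg : d g = g)
    {i : V} (hi : i ∈ treeOf d g) (j : ℕ) : d^[j] i ∈ treeOf d g := by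
  obtain ⟨k, hk⟩ := mem_treeOf.1 hi
  rw [mem_treeOf]
  rcases le_or_gt j k with h | h
  · exact ⟨k - j, by rw [← Function.iterate_add_apply, Nat.sub_add_cancel h, hk]⟩
  · refine ⟨0, ?_⟩
    have : d^[j] i = d^[j - k] (d^[k] i) := by
      rw [← Function.iterate_add_apply, Nat.sub_add_cancel h.le]
    simp [this, hk, Function.iterate_fixed hg]

lemma treeOf_escape {V : Type*} [Fintype V] {d : V → V} {g : V}
    {i : V} (hi : i ∉ treeOf d g) (j : ℕ) : d^[j] i ∉ treeOf d g := by
  intro h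
  obtain ⟨k, hk⟩ := mem_treeOf.1 h
  exact hi (mem_treeOf.2 ⟨k + j, by rw [Function.iterate_add_apply, hk]⟩)

lemma gamma_union_le {V : Type*} [Fintype V] (w : V → ℕ) (d : V → V) {g : V}
    (hg : d g = g) (C : Finset V) :
    gamma w d (C ∪ treeOf d g) ≤ gamma w d C + ∑ l ∈ treeOf d g, w l := by
  classical
  have hsplit : C ∪ treeOf d g = (C \ treeOf d g) ∪ treeOf d g := by
    rw [sdiff_union_self_eq_union]
  rw [gamma, hsplit, Finset.sum_union sdiff_disjoint]
  gcongr with i hi i hi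
  · calc ∑ i ∈ C \ treeOf d g,
        (if ∀ k : ℕ, d^[k] i ∈ (C \ treeOf d g ∪ treeOf d g) then w i else 0)
        ≤ ∑ i ∈ C \ treeOf d g, (if ∀ k : ℕ, d^[k] i ∈ C then w i else 0) := by
          apply Finset.sum_le_sum
          intro i hi
          obtain ⟨hiC, hiT⟩ := Finset.mem_sdiff.1 hi
          split_ifs with h1 h2
          · rfl
          · exfalso; apply h2; intro k
            rcases Finset.mem_union.1 (h1 k) with h | h
            · exact (Finset.mem_sdiff.1 h).1
            · exact absurd h (treeOf_escape hiT k)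
          · exact Nat.zero_le _
          · rfl
      _ ≤ gamma w d C := by
          apply Finset.sum_le_sum_of_subset_of_nonneg (Finset.sdiff_subset)
          intros; positivity
  · split_ifs; exacts [le_rfl, Nat.zero_le _]

lemma gamma_union_eq {V : Type*} [Fintype V] (w : V → ℕ) (d : V → V) {g : V}
    (hg : d g = g) (C : Finset V) (hdisj : Disjoint C (treeOf d g)) :
    gamma w d (C ∪ treeOf d g) = gamma w d C + ∑ l ∈ treeOf d g, w l := by
  classical
  rw [gamma, Finset.sum_union hdisj, gamma]
  congr 1
  · apply Finset.sum_congr rfl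
    intro i hi
    have hiT : i ∉ treeOf d g := Finset.disjoint_left.1 hdisj hi
    by_cases h2 : ∀ k : ℕ, d^[k] i ∈ C
    · rw [if_pos h2, if_pos (fun k => Finset.mem_union_left _ (h2 k))]
    · rw [if_neg h2, if_neg]
      intro h1
      exact h2 fun k => (Finset.mem_union.1 (h1 k)).resolve_right (treeOf_escape hiT k)
  · apply Finset.sum_congr rfl
    intro i hi
    rw [if_pos fun k => Finset.mem_union_right _ (treeOf_closed hg hi k)]

/-- Key fact for GAMW. Let gmax be a guru of maximum accumulated
weight. For any losing coalition C disjoint from T_d(gmax): if C ∪ T_d(gmax) is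
still losing, then C ∪ T_d(g) is losing for every guru g. -/
theorem stmt16 {V : Type*} [Fintype V] (w : V → ℕ) (q : ℕ) (d : V → V)
    (hacyc : ∀ v, ∃ k, d (d^[k] v) = d^[k] v)
    (gmax : V) (hgmax : d gmax = gmax)
    (hmax : ∀ g, d g = g → ∑ l ∈ treeOf d g, w l ≤ ∑ l ∈ treeOf d gmax, w l)
    (C : Finset V) (hdisj : Disjoint C (treeOf d gmax))
    (hlose : ¬ wins w d q C)
    (hlose2 : ¬ wins w d q (C ∪ treeOf d gmax)) :
    ∀ g, d g = g → ¬ wins w d q (C ∪ treeOf d g) := by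
  intro g hg hw
  apply hlose2
  unfold wins at hw ⊢
  calc q ≤ gamma w d (C ∪ treeOf d g) := hw
    _ ≤ gamma w d C + ∑ l ∈ treeOf d g, w l := gamma_union_le w d hg C
    _ ≤ gamma w d C + ∑ l ∈ treeOf d gmax, w l := by
        exact Nat.add_le_add_left (hmax g hg) _
    _ = gamma w d (C ∪ treeOf d gmax) := (gamma_union_eq w d hgmax C hdisj).symm
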